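/- Let x, F, g ∈ ℝ^d with ‖x‖² ≥ D > 0, suppose ⟨x, g⟩ ≥ cos β · ‖x‖·‖g‖ and ‖F − g‖ ≤ sin α · ‖g‖ with α, β ≥ 0 and α + β < π/2, and g ≠ 0. Then ⟨x, F⟩ ≥ ‖x‖·‖F‖·cos(α + β) > 0. -/

import Mathlib

set_option maxHeartbeats 1600000


open Real

theorem stmt_9 (d : ℕ) (x F g : EuclideanSpace ℝ (Fin d)) (D α β : ℝ)
    (hD : 0 < D) (hx : D ≤ ‖x‖ ^ 2) (hg : g ≠ 0)
    (hα : 0 ≤ α) (hβ : 0 ≤ β) (hαβ : α + β < π / 2)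
    (hxg : (inner ℝ x g : ℝ) ≥ Real.cos β * ‖x‖ * ‖g‖)
    (hFg : ‖F - g‖ ≤ Real.sin α * ‖g‖) :
    (inner ℝ x F : ℝ) ≥ ‖x‖ * ‖F‖ * Real.cos (α + β) ∧
      0 < ‖x‖ * ‖F‖ * Real.cos (α + β) := by
  have hng : (0:ℝ) < ‖g‖ := norm_pos_iff.mpr hg
  have hnx : (0:ℝ) < ‖x‖ := by
    have := norm_nonneg x; nlinarith
  have hca : 0 < Real.cos α := Real.cos_pos_of_mem_Ioo ⟨by linarith [Real.pi_pos], by linarith⟩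
  have hcb : 0 < Real.cos β := Real.cos_pos_of_mem_Ioo ⟨by linarith [Real.pi_pos], by linarith⟩
  have hcab : 0 < Real.cos (α + β) :=
    Real.cos_pos_of_mem_Ioo ⟨by linarith [Real.pi_pos], hαβ⟩
  have hsa : 0 ≤ Real.sin α := Real.sin_nonneg_of_nonneg_of_le_pi hα (by linarith [Real.pi_pos])
  have hsb : 0 ≤ Real.sin β := Real.sin_nonneg_of_nonneg_of_le_pi hβ (by linarith [Real.pi_pos])
  have hsa1 : Real.sin α < 1 := by
    nlinarith [Real.sin_sq_add_cos_sq α]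
  have hnF : 0 < ‖F‖ := by
    have h1 : ‖g‖ - ‖F‖ ≤ ‖F - g‖ := by
      have := norm_sub_norm_le g F
      rwa [norm_sub_rev] at this
    nlinarith
  set a : ℝ := (inner ℝ x g : ℝ) with ha
  set b : ℝ := (inner ℝ F g : ℝ) with hb
  set G : ℝ := ‖g‖ ^ 2 with hG
  have hGpos : 0 < G := by positivity
  have hGinner : (inner ℝ g g : ℝ) = G := real_inner_self_eq_norm_sq g
  -- inner F g is large
  have hFg2 : ‖F - g‖ ^ 2 ≤ (Real.sin α * ‖g‖) ^ 2 :=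
    pow_le_pow_left₀ (norm_nonneg _) hFg 2
  have hexp : ‖F - g‖ ^ 2 = ‖F‖ ^ 2 - 2 * b + ‖g‖ ^ 2 := by
    rw [hb, @norm_sub_sq_real]
  have hbF : b ≥ Real.cos α * ‖F‖ * ‖g‖ := by
    nlinarith [sq_nonneg (‖F‖ - Real.cos α * ‖g‖), Real.sin_sq_add_cos_sq α]
  have haX : a ≥ 0 := le_trans (by positivity) hxg
  have hbX : b ≥ 0 := le_trans (by positivity) hbF
  -- orthogonal decomposition
  set x' : EuclideanSpace ℝ (Fin d) := x - (a / G) • g with hx'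
  set F' : EuclideanSpace ℝ (Fin d) := F - (b / G) • g with hF'
  have hnormsmul : ∀ c : ℝ, 0 ≤ c → ‖c • g‖ = c * ‖g‖ := by
    intro c hc
    rw [norm_smul, Real.norm_eq_abs, abs_of_nonneg hc]
  have hinner : (inner ℝ x' F' : ℝ) = (inner ℝ x F : ℝ) - a * b / G := by
    have hgF : (inner ℝ g F : ℝ) = b := (real_inner_comm g F).symm ▸ (real_inner_comm F g)
    have hgx : (inner ℝ g x : ℝ) = a := (real_inner_comm g x).symm ▸ (real_inner_comm x g)
    simp only [hx', hF', inner_sub_left, inner_sub_right, real_inner_smul_left,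
      real_inner_smul_right, hGinner, hgF, hgx, ← ha, ← hb]
    field_simp
    ring
  have hnx'2 : ‖x'‖ ^ 2 = ‖x‖ ^ 2 - a ^ 2 / G := by
    rw [hx', @norm_sub_sq_real, real_inner_smul_right, ← ha,
      hnormsmul (a / G) (by positivity)]
    field_simp
    ring
  have hnF'2 : ‖F'‖ ^ 2 = ‖F‖ ^ 2 - b ^ 2 / G := by
    rw [hF', @norm_sub_sq_real, real_inner_smul_right, ← hb,
      hnormsmul (b / G) (by positivity)]
    field_simp
    ring
  have hcs : -(‖x'‖ * ‖F'‖) ≤ (inner ℝ x' F' : ℝ) :=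
    (abs_le.mp (abs_real_inner_le_norm x' F')).1
  set I : ℝ := (inner ℝ x F : ℝ) with hI
  set nx' : ℝ := ‖x'‖ with hnx'
  set nF' : ℝ := ‖F'‖ with hnF'
  have hnx'0 : 0 ≤ nx' := norm_nonneg _
  have hnF'0 : 0 ≤ nF' := norm_nonneg _
  clear_value a b G x' F' I nx' nF'
  clear hx' hF' ha hb hI hexp hFg2 hFg hGinner hnormsmul
  -- bounds on perpendicular parts
  have hxb : nx' ≤ Real.sin β * ‖x‖ := by
    have hdiv : Real.cos β ^ 2 * ‖x‖ ^ 2 ≤ a ^ 2 / G := by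
      rw [le_div_iff₀ hGpos, hG]
      nlinarith [mul_le_mul hxg hxg (by positivity : (0:ℝ) ≤ Real.cos β * ‖x‖ * ‖g‖) haX]
    have h1 : nx' ^ 2 ≤ (Real.sin β * ‖x‖) ^ 2 := by
      rw [hnx'2]
      nlinarith [Real.sin_sq_add_cos_sq β]
    have := Real.sqrt_le_sqrt h1
    rwa [Real.sqrt_sq hnx'0, Real.sqrt_sq (by positivity)] at this
  have hFb : nF' ≤ Real.sin α * ‖F‖ := by
    have hdiv : Real.cos α ^ 2 * ‖F‖ ^ 2 ≤ b ^ 2 / G := by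
      rw [le_div_iff₀ hGpos, hG]
      nlinarith [mul_le_mul hbF hbF (by positivity : (0:ℝ) ≤ Real.cos α * ‖F‖ * ‖g‖) hbX]
    have h1 : nF' ^ 2 ≤ (Real.sin α * ‖F‖) ^ 2 := by
      rw [hnF'2]
      nlinarith [Real.sin_sq_add_cos_sq α]
    have := Real.sqrt_le_sqrt h1
    rwa [Real.sqrt_sq hnF'0, Real.sqrt_sq (by positivity)] at this
  have hprod : nx' * nF' ≤ (Real.sin β * ‖x‖) * (Real.sin α * ‖F‖) :=
    mul_le_mul hxb hFb hnF'0 (by positivity)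
  have habG : Real.cos α * Real.cos β * (‖x‖ * ‖F‖) ≤ a * b / G := by
    rw [le_div_iff₀ hGpos, hG]
    nlinarith [mul_le_mul hxg hbF (by positivity) haX]
  constructor
  · have hIeq : I = a * b / G + (inner ℝ x' F' : ℝ) := by linarith [hinner]
    rw [hIeq, Real.cos_add]
    nlinarith
  · positivity
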